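/- For k ≥ 3, the generalized quaternion group Q_{2^{k+1}} = ⟨x, y : x^{2^k} = 1, y^2 = x^{2^{k-1}}, y x y^{-1} = x^{-1}⟩ has more than two irredundant covers. -/

import Mathlib

/-- A cover of a group: a finite collection of proper subgroups whose union is the group. -/
def IsCover {G : Type*} [Group G] (S : Finset (Subgroup G)) : Prop :=
  (∀ H ∈ S, H ≠ ⊤) ∧ ∀ g : G, ∃ H ∈ S, g ∈ H

/-- An irredundant cover: a cover with no proper subcollection that is also a cover. -/
def IsIrredundantCover {G : Type*} [Group G] (S : Finset (Subgroup G)) : Prop :=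
  IsCover S ∧ ∀ T : Finset (Subgroup G), T ⊂ S → ¬ IsCover T

/-- β(G): the number of irredundant covers of G. -/
noncomputable def beta (G : Type*) [Group G] : ℕ :=
  Nat.card {S : Finset (Subgroup G) // IsIrredundantCover S}

/-- A maximal cyclic subgroup: cyclic, and not contained in any strictly larger cyclic subgroup. -/
def IsMaximalCyclic {G : Type*} [Group G] (C : Subgroup G) : Prop :=
  IsCyclic ↥C ∧ ∀ D : Subgroup G, IsCyclic ↥D → C ≤ D → D = C

/-- A cyclically embedded subgroup: ⟨N, x⟩ is cyclic for all x. -/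
def CyclicallyEmbedded {G : Type*} [Group G] (N : Subgroup G) : Prop :=
  ∀ x : G, IsCyclic ↥(N ⊔ Subgroup.zpowers x)

open QuaternionGroup Subgroup Multiplicative

namespace Quat11

variable {n : ℕ}

def cast2 : ZMod (2*n) →+* ZMod 2 := ZMod.castHom ⟨n, rfl⟩ (ZMod 2)

def psi : QuaternionGroup n →* Multiplicative (ZMod 2) where
  toFun g := match g with
    | .a _ => 1
    | .xa _ => ofAdd 1
  map_one' := rfl
  map_mul' := by rintro (i|i) (j|j) <;> simp only [a_mul_a, a_mul_xa, xa_mul_a, xa_mul_xa] <;> decide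

def phi (hn : 2 ∣ n) (c : ZMod 2) : QuaternionGroup n →* Multiplicative (ZMod 2) where
  toFun g := match g with
    | .a i => ofAdd (cast2 i)
    | .xa i => ofAdd (cast2 i + c)
  map_one' := by
    show ofAdd (cast2 0) = 1
    simp
  map_mul' := by
    have hn0 : cast2 ((n:ℕ) : ZMod (2*n)) = (0 : ZMod 2) := by
      rw [cast2, map_natCast]
      exact (ZMod.natCast_eq_zero_iff n 2).mpr hn
    rintro (i|i) (j|j)
    · show ofAdd (cast2 (i+j)) = ofAdd (cast2 i + cast2 j)
      exact congrArg _ (map_add _ i j)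
    · show ofAdd (cast2 (j - i) + c) = ofAdd (cast2 i + (cast2 j + c))
      refine congrArg _ ?_
      rw [map_sub]
      generalize cast2 i = x; generalize cast2 j = y
      revert c x y; decide
    · show ofAdd (cast2 (i + j) + c) = ofAdd ((cast2 i + c) + cast2 j)
      refine congrArg _ ?_
      rw [map_add]; ring
    · show ofAdd (cast2 ((n : ZMod (2*n)) + j - i)) = ofAdd ((cast2 i + c) + (cast2 j + c))
      refine congrArg _ ?_
      rw [map_sub, map_add, hn0]
      generalize cast2 i = x; generalize cast2 j = y
      revert c x y; decide

lemma mem_psi_ker_a (i : ZMod (2*n)) : QuaternionGroup.a i ∈ psi.ker := rfl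

lemma xa_notMem_psi_ker (i : ZMod (2*n)) : QuaternionGroup.xa i ∉ psi.ker := by
  intro h
  have h' : psi (QuaternionGroup.xa i) = 1 := h
  have : (ofAdd (1 : ZMod 2)) = 1 := h'
  exact absurd this (by decide)

lemma mem_phi_ker_a (hn : 2 ∣ n) (c : ZMod 2) (i : ZMod (2*n)) :
    QuaternionGroup.a i ∈ (phi hn c).ker ↔ cast2 i = 0 := Iff.rfl

lemma mem_phi_ker_xa (hn : 2 ∣ n) (c : ZMod 2) (i : ZMod (2*n)) :
    QuaternionGroup.xa i ∈ (phi hn c).ker ↔ cast2 i + c = 0 := Iff.rfl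

lemma neg_n_eq : -((n:ℕ) : ZMod (2*n)) = ((n:ℕ) : ZMod (2*n)) := by
  have h := ZMod.natCast_self (2*n)
  push_cast at h
  linear_combination -h

lemma mem_B [NeZero n] (i : ZMod (2*n)) (g : QuaternionGroup n) :
    g ∈ zpowers (QuaternionGroup.xa i) ↔
      g = 1 ∨ g = QuaternionGroup.xa i ∨ g = QuaternionGroup.a ((n:ℕ) : ZMod (2*n)) ∨
        g = QuaternionGroup.xa (((n:ℕ) : ZMod (2*n)) + i) := by
  have hneg := neg_n_eq (n := n)
  have hpow3 : QuaternionGroup.xa i ^ 3 = QuaternionGroup.xa (((n:ℕ) : ZMod (2*n)) + i) := by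
    rw [pow_succ, xa_sq, a_mul_xa, sub_eq_add_neg, hneg, add_comm]
  rw [← mem_powers_iff_mem_zpowers, Submonoid.mem_powers_iff]
  constructor
  · rintro ⟨m, hm⟩
    rw [← pow_mod_orderOf, orderOf_xa] at hm
    have : m % 4 = 0 ∨ m % 4 = 1 ∨ m % 4 = 2 ∨ m % 4 = 3 := by omega
    rcases this with h|h|h|h <;> rw [h] at hm
    · left; rw [← hm, pow_zero]
    · right; left; rw [← hm, pow_one]
    · right; right; left; rw [← hm, xa_sq]
    · right; right; right; rw [← hm, hpow3]
  · rintro (rfl|rfl|rfl|rfl)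
    exacts [⟨0, pow_zero _⟩, ⟨1, pow_one _⟩, ⟨2, xa_sq i⟩, ⟨3, hpow3⟩]

lemma irredundant_of_witness {G : Type*} [Group G] {S : Finset (Subgroup G)} (hc : IsCover S)
    (hw : ∀ s ∈ S, ∃ g : G, ∀ H ∈ S, g ∈ H → H = s) : IsIrredundantCover S := by
  refine ⟨hc, fun T hT hTc => ?_⟩
  obtain ⟨s, hsS, hsT⟩ := Finset.exists_of_ssubset hT
  obtain ⟨g, huniq⟩ := hw s hsS
  obtain ⟨H, hHT, hgH⟩ := hTc.2 g
  exact hsT (huniq H (hT.subset hHT) hgH ▸ hHT)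

end Quat11

section Part2
open QuaternionGroup Subgroup Multiplicative Quat11

namespace Quat11

variable {n : ℕ}

def Agrp (n : ℕ) : Subgroup (QuaternionGroup n) := psi.ker

def Bgrp (n : ℕ) (j : ℕ) : Subgroup (QuaternionGroup n) :=
  zpowers (QuaternionGroup.xa ((j : ℕ) : ZMod (2*n)))

lemma cast_inj {a b : ℕ} (ha : a < 2*n) (hb : b < 2*n)
    (h : (a : ZMod (2*n)) = (b : ZMod (2*n))) : a = b := by
  have := congrArg ZMod.val h
  rwa [ZMod.val_cast_of_lt ha, ZMod.val_cast_of_lt hb] at this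

lemma cast2_natCast (m : ℕ) : cast2 ((m : ℕ) : ZMod (2*n)) = (m : ZMod 2) := by
  rw [cast2, map_natCast]

lemma cast2_natCast_eq_zero (m : ℕ) : cast2 ((m : ℕ) : ZMod (2*n)) = 0 ↔ 2 ∣ m := by
  rw [cast2_natCast]; exact ZMod.natCast_eq_zero_iff m 2

-- membership of a-elements in Bgrp
lemma a_notMem_Bgrp (h4 : 4 ≤ n) {m : ℕ} (hm0 : 0 < m) (hmn : m < n) (j : ℕ) :
    QuaternionGroup.a ((m : ℕ) : ZMod (2*n)) ∉ Bgrp n j := by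
  haveI : NeZero n := ⟨by omega⟩
  rw [Bgrp, mem_B]
  rintro (h|h|h|h)
  · rw [one_def] at h
    injection h with h'
    have := congrArg ZMod.val h'
    rw [ZMod.val_cast_of_lt (by omega), ZMod.val_zero] at this
    omega
  · exact nomatch h
  · injection h with h'
    exact absurd (cast_inj (by omega) (by omega) h') (by omega)
  · exact nomatch h

lemma xa_mem_Bgrp_iff (h4 : 4 ≤ n) {i j : ℕ} (hi : i < 2*n) (hj : j < n) :
    QuaternionGroup.xa ((i : ℕ) : ZMod (2*n)) ∈ Bgrp n j ↔ i = j ∨ i = n + j := by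
  haveI : NeZero n := ⟨by omega⟩
  rw [Bgrp, mem_B]
  constructor
  · rintro (h|h|h|h)
    · rw [one_def] at h; exact nomatch h
    · injection h with h'
      exact Or.inl (cast_inj hi (by omega) h')
    · exact nomatch h
    · injection h with h'
      rw [← Nat.cast_add] at h'
      exact Or.inr (cast_inj hi (by omega) h')
  · rintro (rfl|rfl)
    · right; left; rfl
    · right; right; right
      rw [Nat.cast_add]
  
end Quat11
end Part2

section Part3
open QuaternionGroup Subgroup Multiplicative Quat11

namespace Quat11

lemma main (n : ℕ) (h4 : 4 ≤ n) (h2 : 2 ∣ n) : 2 < beta (QuaternionGroup n) := by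
  classical
  haveI : NeZero n := ⟨by omega⟩
  haveI : NeZero (2*n) := ⟨by omega⟩
  set A : Subgroup (QuaternionGroup n) := Agrp n with hAdef
  set M0 : Subgroup (QuaternionGroup n) := (phi h2 0).ker with hM0def
  set M1 : Subgroup (QuaternionGroup n) := (phi h2 1).ker with hM1def
  set B : ℕ → Subgroup (QuaternionGroup n) := Bgrp n with hBdef
  -- basic membership facts
  have hAa : ∀ i, QuaternionGroup.a i ∈ A := mem_psi_ker_a
  have hAxa : ∀ i, QuaternionGroup.xa i ∉ A := xa_notMem_psi_ker
  have hM0a : ∀ m : ℕ, QuaternionGroup.a ((m:ℕ) : ZMod (2*n)) ∈ M0 ↔ 2 ∣ m := by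
    intro m
    rw [hM0def, mem_phi_ker_a, cast2_natCast_eq_zero]
  have hM1a : ∀ m : ℕ, QuaternionGroup.a ((m:ℕ) : ZMod (2*n)) ∈ M1 ↔ 2 ∣ m := by
    intro m
    rw [hM1def, mem_phi_ker_a, cast2_natCast_eq_zero]
  have hM0xa : ∀ m : ℕ, QuaternionGroup.xa ((m:ℕ) : ZMod (2*n)) ∈ M0 ↔ 2 ∣ m := by
    intro m
    rw [hM0def, mem_phi_ker_xa, add_zero, cast2_natCast_eq_zero]
  have hM1xa : ∀ m : ℕ, QuaternionGroup.xa ((m:ℕ) : ZMod (2*n)) ∈ M1 ↔ ¬ 2 ∣ m := by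
    intro m
    rw [hM1def, mem_phi_ker_xa, cast2_natCast]
    have : ∀ x : ZMod 2, x + 1 = 0 ↔ ¬ x = 0 := by decide
    rw [this]
    exact not_congr (ZMod.natCast_eq_zero_iff m 2)
  have hxaB : ∀ i, QuaternionGroup.xa ((i:ℕ) : ZMod (2*n)) ∈ B i := by
    intro i; exact Subgroup.mem_zpowers _
  -- properness
  have hAtop : A ≠ ⊤ := by
    intro h
    exact hAxa 0 (h ▸ Subgroup.mem_top _)
  have hM0top : M0 ≠ ⊤ := by
    intro h
    have : QuaternionGroup.a ((1:ℕ) : ZMod (2*n)) ∈ M0 := h ▸ Subgroup.mem_top _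
    rw [hM0a] at this; omega
  have hM1top : M1 ≠ ⊤ := by
    intro h
    have : QuaternionGroup.a ((1:ℕ) : ZMod (2*n)) ∈ M1 := h ▸ Subgroup.mem_top _
    rw [hM1a] at this; omega
  have hBtop : ∀ j, B j ≠ ⊤ := by
    intro j h
    have hm : QuaternionGroup.a ((1:ℕ) : ZMod (2*n)) ∈ B j := by
      rw [h]; exact Subgroup.mem_top _
    exact a_notMem_Bgrp h4 (m := 1) (by omega) (by omega) j hm
  -- the three covers
  set S1 : Finset (Subgroup (QuaternionGroup n)) := {A, M0, M1} with hS1def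
  set S2 : Finset (Subgroup (QuaternionGroup n)) :=
    insert A ((Finset.range n).image B) with hS2def
  set S3 : Finset (Subgroup (QuaternionGroup n)) :=
    insert A (insert M0 (((Finset.range n).filter (fun i => ¬ 2 ∣ i)).image B)) with hS3def
  -- decompose an xa element
  have hxa_decomp : ∀ i : ZMod (2*n), ∃ v : ℕ, v < 2*n ∧ QuaternionGroup.xa i =
      QuaternionGroup.xa ((v:ℕ) : ZMod (2*n)) := by
    intro i
    refine ⟨i.val, ZMod.val_lt i, ?_⟩
    rw [ZMod.natCast_val, ZMod.cast_id]
  -- S1 is an irredundant cover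
  have hI1 : IsIrredundantCover S1 := by
    have hc : IsCover S1 := by
      constructor
      · intro H hH
        rw [hS1def, Finset.mem_insert, Finset.mem_insert, Finset.mem_singleton] at hH
        rcases hH with rfl|rfl|rfl
        exacts [hAtop, hM0top, hM1top]
      · rintro (i|i)
        · exact ⟨A, by simp [hS1def], hAa i⟩
        · obtain ⟨v, hv, hveq⟩ := hxa_decomp i
          rw [hveq]
          by_cases hpar : 2 ∣ v
          · exact ⟨M0, by simp [hS1def], (hM0xa v).mpr hpar⟩
          · exact ⟨M1, by simp [hS1def], (hM1xa v).mpr hpar⟩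
    refine irredundant_of_witness hc ?_
    intro s hs
    rw [hS1def, Finset.mem_insert, Finset.mem_insert, Finset.mem_singleton] at hs
    rcases hs with rfl|rfl|rfl
    · refine ⟨QuaternionGroup.a ((1:ℕ) : ZMod (2*n)), ?_⟩
      intro H hH hg
      rw [hS1def, Finset.mem_insert, Finset.mem_insert, Finset.mem_singleton] at hH
      rcases hH with rfl|rfl|rfl
      · rfl
      · rw [hM0a] at hg; omega
      · rw [hM1a] at hg; omega
    · refine ⟨QuaternionGroup.xa ((0:ℕ) : ZMod (2*n)), ?_⟩
      intro H hH hg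
      rw [hS1def, Finset.mem_insert, Finset.mem_insert, Finset.mem_singleton] at hH
      rcases hH with rfl|rfl|rfl
      · exact absurd hg (hAxa _)
      · rfl
      · rw [hM1xa] at hg; omega
    · refine ⟨QuaternionGroup.xa ((1:ℕ) : ZMod (2*n)), ?_⟩
      intro H hH hg
      rw [hS1def, Finset.mem_insert, Finset.mem_insert, Finset.mem_singleton] at hH
      rcases hH with rfl|rfl|rfl
      · exact absurd hg (hAxa _)
      · rw [hM0xa] at hg; omega
      · rfl
  -- membership characterizations
  have hS2mem : ∀ H, H ∈ S2 ↔ H = A ∨ ∃ j < n, H = B j := by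
    intro H
    rw [hS2def, Finset.mem_insert, Finset.mem_image]
    simp only [Finset.mem_range]
    constructor
    · rintro (rfl|⟨j,hj,hjH⟩)
      exacts [Or.inl rfl, Or.inr ⟨j, hj, hjH.symm⟩]
    · rintro (rfl|⟨j,hj,rfl⟩)
      exacts [Or.inl rfl, Or.inr ⟨j, hj, rfl⟩]
  have hS3mem : ∀ H, H ∈ S3 ↔ H = A ∨ H = M0 ∨ ∃ j, (j < n ∧ ¬ 2 ∣ j) ∧ H = B j := by
    intro H
    rw [hS3def, Finset.mem_insert, Finset.mem_insert, Finset.mem_image]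
    simp only [Finset.mem_filter, Finset.mem_range]
    constructor
    · rintro (rfl|rfl|⟨j,hj,hjH⟩)
      exacts [Or.inl rfl, Or.inr (Or.inl rfl), Or.inr (Or.inr ⟨j, hj, hjH.symm⟩)]
    · rintro (rfl|rfl|⟨j,hj,rfl⟩)
      exacts [Or.inl rfl, Or.inr (Or.inl rfl), Or.inr (Or.inr ⟨j, hj, rfl⟩)]
  -- S2 is an irredundant cover
  have hI2 : IsIrredundantCover S2 := by
    have hc : IsCover S2 := by
      constructor
      · intro H hH
        rcases (hS2mem H).mp hH with rfl|⟨j,hj,rfl⟩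
        exacts [hAtop, hBtop j]
      · rintro (i|i)
        · exact ⟨A, (hS2mem A).mpr (Or.inl rfl), hAa i⟩
        · obtain ⟨v, hv, hveq⟩ := hxa_decomp i
          rw [hveq]
          by_cases hvn : v < n
          · exact ⟨B v, (hS2mem _).mpr (Or.inr ⟨v, hvn, rfl⟩), hxaB v⟩
          · refine ⟨B (v - n), (hS2mem _).mpr (Or.inr ⟨v - n, by omega, rfl⟩), ?_⟩
            rw [hBdef, xa_mem_Bgrp_iff h4 hv (by omega)]
            omega
    refine irredundant_of_witness hc ?_
    intro s hs
    rcases (hS2mem s).mp hs with rfl|⟨j,hj,rfl⟩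
    · refine ⟨QuaternionGroup.a ((1:ℕ) : ZMod (2*n)), ?_⟩
      intro H hH hg
      rcases (hS2mem H).mp hH with rfl|⟨l,hl,rfl⟩
      · rfl
      · rw [hBdef] at hg
        exact absurd hg (a_notMem_Bgrp h4 (by omega) (by omega) l)
    · refine ⟨QuaternionGroup.xa ((j:ℕ) : ZMod (2*n)), ?_⟩
      intro H hH hg
      rcases (hS2mem H).mp hH with rfl|⟨l,hl,rfl⟩
      · exact absurd hg (hAxa _)
      · rw [hBdef, xa_mem_Bgrp_iff h4 (by omega) hl] at hg
        have hjl : j = l := by omega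
        rw [hjl]
  -- S3 is an irredundant cover
  have hI3 : IsIrredundantCover S3 := by
    have hc : IsCover S3 := by
      constructor
      · intro H hH
        rcases (hS3mem H).mp hH with rfl|rfl|⟨j,hj,rfl⟩
        exacts [hAtop, hM0top, hBtop j]
      · rintro (i|i)
        · exact ⟨A, (hS3mem A).mpr (Or.inl rfl), hAa i⟩
        · obtain ⟨v, hv, hveq⟩ := hxa_decomp i
          rw [hveq]
          by_cases hpar : 2 ∣ v
          · exact ⟨M0, (hS3mem M0).mpr (Or.inr (Or.inl rfl)), (hM0xa v).mpr hpar⟩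
          · by_cases hvn : v < n
            · exact ⟨B v, (hS3mem _).mpr (Or.inr (Or.inr ⟨v, ⟨hvn, hpar⟩, rfl⟩)), hxaB v⟩
            · refine ⟨B (v - n),
                (hS3mem _).mpr (Or.inr (Or.inr ⟨v - n, ⟨by omega, by omega⟩, rfl⟩)), ?_⟩
              rw [hBdef, xa_mem_Bgrp_iff h4 hv (by omega)]
              omega
    refine irredundant_of_witness hc ?_
    intro s hs
    rcases (hS3mem s).mp hs with rfl|rfl|⟨j,hj,rfl⟩
    · refine ⟨QuaternionGroup.a ((1:ℕ) : ZMod (2*n)), ?_⟩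
      intro H hH hg
      rcases (hS3mem H).mp hH with rfl|rfl|⟨l,hl,rfl⟩
      · rfl
      · rw [hM0a] at hg; omega
      · rw [hBdef] at hg
        exact absurd hg (a_notMem_Bgrp h4 (by omega) (by omega) l)
    · refine ⟨QuaternionGroup.xa ((0:ℕ) : ZMod (2*n)), ?_⟩
      intro H hH hg
      rcases (hS3mem H).mp hH with rfl|rfl|⟨l,hl,rfl⟩
      · exact absurd hg (hAxa _)
      · rfl
      · rw [hBdef, xa_mem_Bgrp_iff h4 (by omega) hl.1] at hg
        exfalso
        rcases hl with ⟨hl1, hl2⟩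
        omega
    · refine ⟨QuaternionGroup.xa ((j:ℕ) : ZMod (2*n)), ?_⟩
      intro H hH hg
      rcases (hS3mem H).mp hH with rfl|rfl|⟨l,hl,rfl⟩
      · exact absurd hg (hAxa _)
      · rw [hM0xa] at hg; exact absurd hg hj.2
      · rw [hBdef, xa_mem_Bgrp_iff h4 (by omega) hl.1] at hg
        have hjl : j = l := by omega
        rw [hjl]
  -- distinctness
  have hM0neA : M0 ≠ A := by
    intro h
    apply hAxa ((0:ℕ) : ZMod (2*n))
    rw [← h]
    exact (hM0xa 0).mpr (by omega)
  have hM0neB : ∀ j, M0 ≠ B j := by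
    intro j h
    have hm : QuaternionGroup.a ((2:ℕ) : ZMod (2*n)) ∈ B j := by
      rw [← h]; exact (hM0a 2).mpr (by omega)
    rw [hBdef] at hm
    exact a_notMem_Bgrp h4 (by omega) (by omega) j hm
  have hBneA : ∀ j, B j ≠ A := by
    intro j h
    apply hAxa ((j:ℕ) : ZMod (2*n))
    rw [← h]
    exact hxaB j
  have hBneM0 : ∀ j, ¬ 2 ∣ j → B j ≠ M0 := by
    intro j hj h
    have hm : QuaternionGroup.xa ((j:ℕ) : ZMod (2*n)) ∈ M0 := by
      rw [← h]; exact hxaB j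
    rw [hM0xa] at hm
    exact hj hm
  have hBneM1 : ∀ j, B j ≠ M1 := by
    intro j h
    have hm : QuaternionGroup.a ((2:ℕ) : ZMod (2*n)) ∈ B j := by
      rw [h]; exact (hM1a 2).mpr (by omega)
    rw [hBdef] at hm
    exact a_notMem_Bgrp h4 (by omega) (by omega) j hm
  have hS1ne2 : S1 ≠ S2 := by
    intro h
    have hm : M0 ∈ S2 := by rw [← h, hS1def]; simp
    rcases (hS2mem M0).mp hm with hEq|⟨j,hj,hEq⟩
    · exact hM0neA hEq
    · exact hM0neB j hEq
  have hS1ne3 : S1 ≠ S3 := by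
    intro h
    have hm : B 1 ∈ S1 := by
      rw [h]
      exact (hS3mem _).mpr (Or.inr (Or.inr ⟨1, ⟨by omega, by omega⟩, rfl⟩))
    rw [hS1def] at hm
    rcases Finset.mem_insert.mp hm with hEq|hm'
    · exact hBneA 1 hEq
    rcases Finset.mem_insert.mp hm' with hEq|hm''
    · exact hBneM0 1 (by omega) hEq
    · exact hBneM1 1 (Finset.mem_singleton.mp hm'')
  have hS2ne3 : S2 ≠ S3 := by
    intro h
    have hm : M0 ∈ S2 := by
      rw [h]
      exact (hS3mem _).mpr (Or.inr (Or.inl rfl))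
    rcases (hS2mem M0).mp hm with hEq|⟨j,hj,hEq⟩
    · exact hM0neA hEq
    · exact hM0neB j hEq
  -- counting
  haveI : Finite (Subgroup (QuaternionGroup n)) :=
    Finite.of_injective _ SetLike.coe_injective
  haveI : Finite {S : Finset (Subgroup (QuaternionGroup n)) // IsIrredundantCover S} :=
    Subtype.finite
  haveI : Fintype {S : Finset (Subgroup (QuaternionGroup n)) // IsIrredundantCover S} :=
    Fintype.ofFinite _
  rw [beta, Nat.card_eq_fintype_card]
  have h3 : ({⟨S1,hI1⟩, ⟨S2,hI2⟩, ⟨S3,hI3⟩} :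
      Finset {S : Finset (Subgroup (QuaternionGroup n)) // IsIrredundantCover S}).card = 3 := by
    rw [Finset.card_insert_of_notMem (by simp [Subtype.mk.injEq, hS1ne2, hS1ne3]),
        Finset.card_insert_of_notMem (by simp [Subtype.mk.injEq, hS2ne3]),
        Finset.card_singleton]
  calc (2:ℕ) < 3 := by norm_num
    _ = _ := h3.symm
    _ ≤ Fintype.card _ := Finset.card_le_univ _

end Quat11
end Part3

theorem stmt11 (k : ℕ) (hk : 3 ≤ k) :
    2 < beta (QuaternionGroup (2 ^ (k - 1))) :=
  Quat11.main _
    (by calc (4:ℕ) = 2 ^ 2 := by norm_num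
          _ ≤ 2 ^ (k - 1) := Nat.pow_le_pow_right (by norm_num) (by omega))
    (dvd_pow_self 2 (by omega : k - 1 ≠ 0))
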